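/- arXiv:1605.05123 — 3 statements merged into one kernel-verified Lean document; each statement's English description precedes it below -/
import Mathlib

section
/- Let G be a simple graph and let c, v be distinct vertices of G that are not adjacent in G. Then the local girth of v in G+(c,v) satisfies g_v(G+(c,v)) = min( g_v(G), dist_G(c,v) + 1 ) in ℕ∞. -/
open SimpleGraph

variable {V : Type*}

/-- `G + (c,v)`: the graph obtained from `G` by adding the edge `{c, v}`. -/
def addEdge (G : SimpleGraph V) (c v : V) : SimpleGraph V :=
  G ⊔ SimpleGraph.fromEdgeSet {s(c, v)}

/-- The local girth of a vertex `v`: the infimum (in `ℕ∞`) of the lengths of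
cycles of `G` passing through `v`. -/
noncomputable def localGirth (G : SimpleGraph V) (v : V) : ℕ∞ :=
  ⨅ (a : V) (w : G.Walk a a) (_ : w.IsCycle) (_ : v ∈ w.support), (w.length : ℕ∞)

/-- The edge local girth of `e`: the infimum (in `ℕ∞`) of the lengths of
cycles of `G` containing the edge `e`. -/
noncomputable def edgeLocalGirth (G : SimpleGraph V) (e : Sym2 V) : ℕ∞ :=
  ⨅ (a : V) (w : G.Walk a a) (_ : w.IsCycle) (_ : e ∈ w.edges), (w.length : ℕ∞)

/-- A length-`r` valid sequence for `v` in `G`: pairwise distinct vertices,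
each distinct from `v` and not adjacent to `v` in `G`. -/
def ValidSeq (G : SimpleGraph V) (v : V) {r : ℕ} (s : Fin r → V) : Prop :=
  Function.Injective s ∧ ∀ i, s i ≠ v ∧ ¬ G.Adj (s i) v

/-- The graph sequence of a sequence `s`: `graphSeq G v s 0 = G₁ = G` and
`graphSeq G v s i = G_{i+1} = G_i + (s_i, v)`. -/
def graphSeq (G : SimpleGraph V) (v : V) {r : ℕ} (s : Fin r → V) : ℕ → SimpleGraph V
  | 0 => G
  | i + 1 => if h : i < r then addEdge (graphSeq G v s i) (s ⟨i, h⟩) v else graphSeq G v s i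

/-- The `r`-edge local girth of `v` in `G`: the supremum, over all length-`r`
valid sequences `s` for `v`, of the local girth of `v` in the final graph. -/
noncomputable def multiEdgeLocalGirth (G : SimpleGraph V) (v : V) (r : ℕ) : ℕ∞ :=
  ⨆ (s : Fin r → V) (_ : ValidSeq G v s), localGirth (graphSeq G v s r) v

/-- The `r`-edge local girth of `c` with respect to `v`:
`g_v(G+(c,v))` if `r = 1`, and `g_v^{(r-1)}(G+(c,v))` if `r ≥ 2`. -/
noncomputable def cnMultiEdgeLocalGirth (G : SimpleGraph V) (c v : V) (r : ℕ) : ℕ∞ :=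
  if r = 1 then localGirth (addEdge G c v) v
  else multiEdgeLocalGirth (addEdge G c v) v (r - 1)

lemma localGirth_le_of_cycle {G : SimpleGraph V} {v a : V} (w : G.Walk a a)
    (hc : w.IsCycle) (hv : v ∈ w.support) : localGirth G v ≤ w.length :=
  iInf_le_of_le a <| iInf_le_of_le w <| iInf_le_of_le hc <| iInf_le_of_le hv le_rfl

lemma mem_edgeSet_addEdge {G : SimpleGraph V} {c v : V} {e : Sym2 V}
    (he : e ∈ (addEdge G c v).edgeSet) (hne : e ≠ s(c, v)) : e ∈ G.edgeSet := by
  simp only [addEdge, edgeSet_sup, edgeSet_fromEdgeSet, Set.mem_union, Set.mem_diff,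
    Set.mem_singleton_iff] at he
  tauto

lemma exists_walk_of_edge_mem {G' : SimpleGraph V} {x y : V} :
    ∀ {u : V} (q : G'.Walk u y), q.IsPath → s(x, y) ∈ q.edges →
      ∃ q₁ : G'.Walk u x, q₁.length + 1 = q.length ∧
        s(x, y) ∉ q₁.edges ∧ ∀ e ∈ q₁.edges, e ∈ q.edges := by
  intro u q
  induction q with
  | nil => simp
  | @cons a b yy h q ih =>
    intro hp hmem
    rw [Walk.cons_isPath_iff] at hp
    by_cases hh : s(a, b) = s(x, yy)
    · rw [Sym2.eq_iff] at hh
      rcases hh with ⟨ha, hb⟩ | ⟨ha, hb⟩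
      · subst ha; subst hb
        have hnil : q = Walk.nil := Walk.isPath_iff_eq_nil.mp hp.1
        subst hnil
        exact ⟨Walk.nil, by simp⟩
      · subst ha
        exact absurd q.end_mem_support hp.2
    · have hmem' : s(x, yy) ∈ q.edges := by
        rcases List.mem_cons.mp hmem with h1 | h1
        · exact absurd h1.symm hh
        · exact h1
      obtain ⟨q₁, hlen, hnot, hsub⟩ := ih hp.1 hmem'
      refine ⟨Walk.cons h q₁, by simp [← hlen], ?_, ?_⟩
      · simp only [Walk.edges_cons, List.mem_cons, not_or]
        exact ⟨fun hcon => hh hcon.symm, hnot⟩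
      · intro e hee
        rcases List.mem_cons.mp hee with rfl | h1
        · exact List.mem_cons_self
        · exact List.mem_cons_of_mem _ (hsub e h1)

lemma exists_walk_avoiding {G' : SimpleGraph V} {c v : V} (hcv : c ≠ v)
    (w : G'.Walk v v) (hc : w.IsCycle) (hmem : s(c, v) ∈ w.edges) :
    ∃ q : G'.Walk v c, q.length + 1 = w.length ∧ s(c, v) ∉ q.edges ∧
      ∀ e ∈ q.edges, e ∈ w.edges := by
  cases w with
  | nil => simp at hmem
  | @cons _ b _ h q =>
    rw [Walk.cons_isCycle_iff] at hc
    by_cases hh : s(v, b) = s(c, v)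
    · rw [Sym2.eq_iff] at hh
      rcases hh with ⟨hv1, hb⟩ | ⟨-, hb⟩
      · exact absurd hv1.symm hcv
      · subst hb
        refine ⟨q.reverse, by simp, ?_, ?_⟩
        · rw [Walk.edges_reverse, List.mem_reverse, Sym2.eq_swap]
          exact hc.2
        · intro e hee
          rw [Walk.edges_reverse, List.mem_reverse] at hee
          exact List.mem_cons_of_mem _ hee
    · have hmem' : s(c, v) ∈ q.edges := by
        rcases List.mem_cons.mp hmem with h1 | h1
        · exact absurd h1.symm hh
        · exact h1
      obtain ⟨q₁, hlen, hnot, hsub⟩ := exists_walk_of_edge_mem q hc.1 hmem'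
      refine ⟨Walk.cons h q₁, by simp [hlen], ?_, ?_⟩
      · simp only [Walk.edges_cons, List.mem_cons, not_or]
        exact ⟨fun hcon => hh hcon.symm, hnot⟩
      · intro e hee
        rcases List.mem_cons.mp hee with rfl | h1
        · exact List.mem_cons_self
        · exact List.mem_cons_of_mem _ (hsub e h1)

/-- For distinct non-adjacent vertices `c, v` of `G`,
`g_v(G+(c,v)) = min(g_v(G), dist_G(c,v) + 1)` in `ℕ∞`. -/
theorem stmt_1 (G : SimpleGraph V) (c v : V) (hne : c ≠ v) (hadj : ¬ G.Adj c v) :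
    localGirth (addEdge G c v) v = min (localGirth G v) (G.edist c v + 1) := by
  classical
  have hle : G ≤ addEdge G c v := le_sup_left
  have hscv : s(c, v) ∉ G.edgeSet := hadj
  apply le_antisymm
  · apply le_min
    · -- ≤ localGirth G v
      refine le_iInf fun a => le_iInf fun w => le_iInf fun hc => le_iInf fun hv => ?_
      have hsub : ∀ e ∈ w.edges, e ∈ (addEdge G c v).edgeSet :=
        fun e he => edgeSet_mono hle (w.edges_subset_edgeSet he)
      have := localGirth_le_of_cycle (w.transfer _ hsub) (hc.transfer hsub)
        (by rw [Walk.support_transfer]; exact hv)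
      rwa [Walk.length_transfer] at this
    · -- ≤ edist + 1
      by_cases hreach : G.Reachable c v
      · obtain ⟨p, hp⟩ := hreach.exists_walk_length_eq_edist
        set q := p.bypass with hq
        have hqpath : q.IsPath := p.bypass_isPath
        have hqlen : q.length ≤ p.length := p.length_bypass_le
        have hsub : ∀ e ∈ q.edges, e ∈ (addEdge G c v).edgeSet :=
          fun e he => edgeSet_mono hle (q.edges_subset_edgeSet he)
        have hvc : (addEdge G c v).Adj v c := by
          apply Or.inr
          simp only [fromEdgeSet_adj, Set.mem_singleton_iff, Sym2.eq_swap]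
          exact ⟨trivial, fun h => hne h.symm⟩
        have hcyc : (Walk.cons hvc (q.transfer _ hsub)).IsCycle := by
          rw [Walk.cons_isCycle_iff]
          refine ⟨hqpath.transfer hsub, ?_⟩
          rw [Walk.edges_transfer]
          intro hmem
          exact hscv (Sym2.eq_swap (a := v) (b := c) ▸ q.edges_subset_edgeSet hmem)
        have := localGirth_le_of_cycle _ hcyc (Walk.start_mem_support _)
        refine this.trans ?_
        have : ((Walk.cons hvc (q.transfer _ hsub)).length : ℕ∞) = (q.length : ℕ∞) + 1 := by
          simp [Walk.length_transfer]
        rw [this, ← hp]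
        exact add_le_add_left (by exact_mod_cast hqlen) 1
      · rw [edist_eq_top_of_not_reachable hreach]
        simp
  · refine le_iInf fun a => le_iInf fun w => le_iInf fun hc => le_iInf fun hv => ?_
    by_cases hmem : s(c, v) ∈ w.edges
    · -- uses the new edge
      have hmem' : s(c, v) ∈ (w.rotate v hv).edges := (w.rotate_edges v hv).mem_iff.mpr hmem
      obtain ⟨q, hqlen, hqnot, hqsub⟩ :=
        exists_walk_avoiding hne (w.rotate v hv) (hc.rotate hv) hmem'
      have hwlen : (w.rotate v hv).length = w.length := by
        rw [← Walk.length_edges, ← Walk.length_edges]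
        exact (w.rotate_edges v hv).perm.length_eq
      have hqG : ∀ e ∈ q.edges, e ∈ G.edgeSet := fun e he =>
        mem_edgeSet_addEdge (Walk.edges_subset_edgeSet _ (hqsub e he))
          (fun h => hqnot (h ▸ he))
      have hd : G.edist c v ≤ q.length := by
        rw [SimpleGraph.edist_comm]
        have := SimpleGraph.edist_le (q.transfer G hqG)
        rwa [Walk.length_transfer] at this
      refine (min_le_right _ _).trans ?_
      calc G.edist c v + 1 ≤ (q.length : ℕ∞) + 1 := add_le_add_left hd 1
        _ = ((q.length + 1 : ℕ) : ℕ∞) := by push_cast; rfl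
        _ = (w.length : ℕ∞) := by rw [hqlen, hwlen]
    · -- cycle entirely in G
      have hGedges : ∀ e ∈ w.edges, e ∈ G.edgeSet := fun e he =>
        mem_edgeSet_addEdge (w.edges_subset_edgeSet he) (fun h => hmem (h ▸ he))
      have := localGirth_le_of_cycle (w.transfer G hGedges) (hc.transfer hGedges)
        (by rw [Walk.support_transfer]; exact hv)
      rw [Walk.length_transfer] at this
      exact (min_le_left _ _).trans this
end

section
/- Let G be a simple graph and v a vertex that has no incident edges in G, and let s_1, s_2 be two distinct vertices, both distinct from v. Then in the graph (G+(s_1,v))+(s_2,v), the infimum of the lengths of cycles passing through v equals dist_G(s_1, s_2) + 2 in ℕ∞. -/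
open SimpleGraph

variable {V : Type*}

section AuxStmt5

lemma addEdge_adj (G : SimpleGraph V) (c v a b : V) :
    (addEdge G c v).Adj a b ↔ G.Adj a b ∨ (s(a,b) = s(c,v) ∧ a ≠ b) := by
  simp [addEdge]

lemma adj_v_iff (G : SimpleGraph V) (v s₁ s₂ : V) (hv : ∀ w, ¬ G.Adj v w)
    (h1v : s₁ ≠ v) (h2v : s₂ ≠ v) (w : V) :
    (addEdge (addEdge G s₁ v) s₂ v).Adj v w ↔ w = s₁ ∨ w = s₂ := by
  simp only [addEdge_adj, Sym2.eq_iff]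
  constructor
  · rintro ((h | ⟨(⟨h1,h2⟩|⟨h1,h2⟩), hne⟩) | ⟨(⟨h1,h2⟩|⟨h1,h2⟩), hne⟩)
    · exact absurd h (hv w)
    · exact absurd h1 h1v.symm
    · exact Or.inl h2
    · exact absurd h1 h2v.symm
    · exact Or.inr h2
  · rintro (rfl | rfl)
    · exact Or.inl (Or.inr ⟨by tauto, fun h => h1v h.symm⟩)
    · exact Or.inr ⟨by tauto, fun h => h2v h.symm⟩

lemma adj_orig (G : SimpleGraph V) (v s₁ s₂ a b : V)
    (h : (addEdge (addEdge G s₁ v) s₂ v).Adj a b) (ha : a ≠ v) (hb : b ≠ v) : G.Adj a b := by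
  rw [addEdge_adj, addEdge_adj] at h
  rcases h with ((h | ⟨h, _⟩) | ⟨h, _⟩)
  · exact h
  · rw [Sym2.eq_iff] at h; rcases h with ⟨_,h2⟩|⟨h1,_⟩ <;> [exact absurd h2 hb; exact absurd h1 ha]
  · rw [Sym2.eq_iff] at h; rcases h with ⟨_,h2⟩|⟨h1,_⟩ <;> [exact absurd h2 hb; exact absurd h1 ha]

lemma lower_cycle (G : SimpleGraph V) (v : V) (hv : ∀ w : V, ¬ G.Adj v w)
    (s₁ s₂ : V) (h12 : s₁ ≠ s₂) (h1v : s₁ ≠ v) (h2v : s₂ ≠ v)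
    (c : (addEdge (addEdge G s₁ v) s₂ v).Walk v v) (hc : c.IsCycle) :
    G.edist s₁ s₂ + 2 ≤ (c.length : ℕ∞) := by
  obtain ⟨x, h, p, rfl⟩ := SimpleGraph.Walk.not_nil_iff.mp hc.not_nil
  have hpn : ¬ p.Nil := by
    intro hpn
    have : p.length = 0 := by
      by_contra hl
      exact (SimpleGraph.Walk.not_nil_iff_lt_length.mpr (Nat.pos_of_ne_zero hl)) hpn
    have hx : x = v := by
      cases p with
      | nil => rfl
      | cons _ _ => simp at this
    exact h.ne hx.symm
  obtain ⟨z, h2, p2, rfl⟩ := SimpleGraph.Walk.not_nil_iff.mp hpn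
  obtain ⟨y, q, h3, heq⟩ := SimpleGraph.Walk.exists_cons_eq_concat h2 p2
  rw [heq] at hc ⊢
  rw [SimpleGraph.Walk.cons_isCycle_iff] at hc
  obtain ⟨hP, hE⟩ := hc
  have hsup : (q.concat h3).support = q.support ++ [v] := by
    simp [SimpleGraph.Walk.support_concat, List.concat_eq_append]
  have hnodup := hP.support_nodup
  rw [hsup] at hnodup
  have hvq : v ∉ q.support := by
    have := List.disjoint_of_nodup_append hnodup
    intro hmem; exact this hmem (by simp)
  have hqpath : q.IsPath := by
    rw [SimpleGraph.Walk.concat_eq_append] at hP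
    exact hP.of_append_left
  have hxy : x ≠ y := by
    rintro rfl
    have : q = Walk.nil := Walk.isPath_iff_eq_nil.mp hqpath
    subst this
    simp [Sym2.eq_swap] at hE
  have hx : x = s₁ ∨ x = s₂ := (adj_v_iff G v s₁ s₂ hv h1v h2v x).mp h
  have hy : y = s₁ ∨ y = s₂ := (adj_v_iff G v s₁ s₂ hv h1v h2v y).mp h3.symm
  have hxv : x ≠ v := fun hh => h.ne (hh ▸ rfl)
  have hqG : ∀ e ∈ q.edges, e ∈ G.edgeSet := by
    intro e he
    have heG' := q.edges_subset_edgeSet he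
    induction e with
    | h a b =>
      have ha : a ∈ q.support := q.fst_mem_support_of_mem_edges he
      have hb : b ∈ q.support := q.snd_mem_support_of_mem_edges he
      exact adj_orig G v s₁ s₂ a b heG' (fun hh => hvq (hh ▸ ha)) (fun hh => hvq (hh ▸ hb))
  have hlen : (q.transfer G hqG).length = q.length := q.length_transfer hqG
  have hdist : G.edist x y ≤ (q.length : ℕ∞) := by
    have := SimpleGraph.edist_le (q.transfer G hqG)
    rwa [hlen] at this
  have hdist12 : G.edist s₁ s₂ ≤ (q.length : ℕ∞) := by
    rcases hx with rfl | rfl <;> rcases hy with rfl | rfl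
    · exact absurd rfl hxy
    · exact hdist
    · rwa [SimpleGraph.edist_comm] at hdist
    · exact absurd rfl hxy
  have hlc : (Walk.cons h (q.concat h3)).length = q.length + 2 := by
    simp [SimpleGraph.Walk.length_concat]
  rw [hlc]
  push_cast
  exact add_le_add_left hdist12 2

lemma upper_bound (G : SimpleGraph V) (v : V) (hv : ∀ w : V, ¬ G.Adj v w)
    (s₁ s₂ : V) (h12 : s₁ ≠ s₂) (h1v : s₁ ≠ v) (h2v : s₂ ≠ v)
    (hne : G.edist s₁ s₂ ≠ ⊤) :
    ∃ (c : (addEdge (addEdge G s₁ v) s₂ v).Walk v v), c.IsCycle ∧ v ∈ c.support ∧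
      (c.length : ℕ∞) ≤ G.edist s₁ s₂ + 2 := by
  classical
  set G' := addEdge (addEdge G s₁ v) s₂ v with hG'
  obtain ⟨w, hw⟩ := SimpleGraph.exists_walk_of_edist_ne_top hne
  set p := w.bypass with hp
  have hppath : p.IsPath := w.bypass_isPath
  have hplen : (p.length : ℕ∞) ≤ G.edist s₁ s₂ := by
    rw [← hw]; exact_mod_cast w.length_bypass_le
  have hreach : ∀ x, G.Reachable v x → v = x := by
    intro x hx
    obtain ⟨r⟩ := hx
    cases r with
    | nil => rfl
    | cons hadj _ => exact absurd hadj (hv _)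
  have hvp : v ∉ p.support := by
    intro hmem
    have : G.Reachable s₁ v := ⟨p.takeUntil v hmem⟩
    exact h1v (hreach s₁ this.symm).symm
  have hle : G ≤ G' := le_trans le_sup_left le_sup_left
  have hsub : ∀ e ∈ p.edges, e ∈ G'.edgeSet :=
    fun e he => SimpleGraph.edgeSet_mono hle (p.edges_subset_edgeSet he)
  set Q := p.transfer G' hsub with hQ
  have hQpath : Q.IsPath := hppath.transfer hsub
  have hQsup : Q.support = p.support := p.support_transfer hsub
  have hQedges : Q.edges = p.edges := p.edges_transfer hsub
  have hQlen : Q.length = p.length := p.length_transfer hsub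
  have h1 : G'.Adj v s₁ := by
    refine Or.inl (Or.inr ?_)
    rw [fromEdgeSet_adj]
    exact ⟨Sym2.eq_swap, fun hh => h1v hh.symm⟩
  have h2 : G'.Adj s₂ v := by
    refine Or.inr ?_
    rw [fromEdgeSet_adj]
    exact ⟨rfl, h2v⟩
  set P := Q.concat h2 with hP
  have hPpath : P.IsPath := by
    rw [← SimpleGraph.Walk.isPath_reverse_iff, hP, SimpleGraph.Walk.reverse_concat,
      SimpleGraph.Walk.cons_isPath_iff]
    refine ⟨hQpath.reverse, ?_⟩
    rw [SimpleGraph.Walk.support_reverse, List.mem_reverse, hQsup]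
    exact hvp
  have hPedges : P.edges = Q.edges ++ [s(s₂, v)] := by
    simp [hP, SimpleGraph.Walk.edges_concat, List.concat_eq_append]
  have hnE : s(v, s₁) ∉ P.edges := by
    rw [hPedges]
    intro hmem
    rcases List.mem_append.mp hmem with hmem | hmem
    · rw [hQedges] at hmem
      exact hvp (p.fst_mem_support_of_mem_edges hmem)
    · simp only [List.mem_singleton, Sym2.eq_iff] at hmem
      rcases hmem with ⟨h1', _⟩ | ⟨_, h2'⟩
      · exact h2v h1'.symm
      · exact h12 h2'
  refine ⟨Walk.cons h1 P, ?_, by simp, ?_⟩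
  · exact (SimpleGraph.Walk.cons_isCycle_iff P h1).mpr ⟨hPpath, hnE⟩
  · have : (Walk.cons h1 P).length = p.length + 2 := by
      simp [hP, SimpleGraph.Walk.length_concat, hQlen]
    rw [this]
    push_cast
    exact add_le_add_left hplen 2

end AuxStmt5

/-- If `v` has no incident edges in `G` and `s₁ ≠ s₂` are both distinct from
`v`, then in `(G+(s₁,v))+(s₂,v)` the infimum of the lengths of cycles passing through `v`
equals `dist_G(s₁, s₂) + 2` in `ℕ∞`. -/
theorem stmt_5 (G : SimpleGraph V) (v : V) (hv : ∀ w : V, ¬ G.Adj v w)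
    (s₁ s₂ : V) (h12 : s₁ ≠ s₂) (h1v : s₁ ≠ v) (h2v : s₂ ≠ v) :
    localGirth (addEdge (addEdge G s₁ v) s₂ v) v = G.edist s₁ s₂ + 2 := by
  classical
  apply le_antisymm
  · by_cases htop : G.edist s₁ s₂ = ⊤
    · rw [htop]
      exact le_top
    · obtain ⟨c, hcyc, hmem, hlen⟩ := upper_bound G v hv s₁ s₂ h12 h1v h2v htop
      refine le_trans ?_ hlen
      unfold localGirth
      exact iInf_le_of_le v (iInf_le_of_le c (iInf_le_of_le hcyc (iInf_le _ hmem)))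
  · unfold localGirth
    refine le_iInf fun a => le_iInf fun w => le_iInf fun hcyc => le_iInf fun hmem => ?_
    have hl : (w.rotate v hmem).length = w.length := by
      have := (w.rotate_darts v hmem).perm.length_eq
      simpa [SimpleGraph.Walk.length_darts] using this
    have := lower_cycle G v hv s₁ s₂ h12 h1v h2v (w.rotate v hmem) (hcyc.rotate hmem)
    rw [hl] at this
    exact this
end

section
/- Let G be a simple graph, v a vertex, r ≥ 1 an integer, and c a vertex with c ≠ v and ¬G.Adj c v. Then g_{c,v}^{(r)}(G) ≤ dist_G(c,v) + 1 in ℕ∞; equivalently, the r-edge local girth of c with respect to v is at most the infimum of the lengths of cycles of G+(c,v) containing the edge {c,v}. -/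
open SimpleGraph

variable {V : Type*}

section Aux

lemma localGirth_le {G : SimpleGraph V} {a v : V} {w : G.Walk a a} (hw : w.IsCycle)
    (hv : v ∈ w.support) : localGirth G v ≤ w.length :=
  iInf_le_of_le a (iInf_le_of_le w (iInf_le_of_le hw (iInf_le _ hv)))

lemma edgeLocalGirth_le {G : SimpleGraph V} {a : V} {e : Sym2 V} {w : G.Walk a a}
    (hw : w.IsCycle) (he : e ∈ w.edges) : edgeLocalGirth G e ≤ w.length :=
  iInf_le_of_le a (iInf_le_of_le w (iInf_le_of_le hw (iInf_le _ he)))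

lemma localGirth_anti {G H : SimpleGraph V} (h : G ≤ H) (v : V) :
    localGirth H v ≤ localGirth G v := by
  refine le_iInf fun a => le_iInf fun w => le_iInf fun hw => le_iInf fun hv => ?_
  have := localGirth_le (G := H) (v := v) (hw.mapLe h) ?_
  · simpa using this
  · simp only [SimpleGraph.Walk.mapLe, SimpleGraph.Walk.support_map, List.mem_map]
    exact ⟨v, hv, rfl⟩

lemma le_graphSeq (G : SimpleGraph V) (v : V) {r : ℕ} (s : Fin r → V) :
    ∀ i, G ≤ graphSeq G v s i := by
  intro i
  induction i with
  | zero => exact le_rfl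
  | succ n ih =>
    rw [graphSeq]
    split
    · exact ih.trans le_sup_left
    · exact ih

lemma localGirth_le_edgeLocalGirth {G : SimpleGraph V} {c v : V} :
    localGirth G v ≤ edgeLocalGirth G s(c, v) := by
  refine le_iInf fun a => le_iInf fun w => le_iInf fun hw => le_iInf fun he => ?_
  exact localGirth_le hw (w.snd_mem_support_of_mem_edges he)

end Aux

/-- For `r ≥ 1` and `c ≠ v` not adjacent to `v` in `G`,
`g_{c,v}^{(r)}(G) ≤ dist_G(c,v) + 1`; equivalently, it is at most the infimum of the
lengths of cycles of `G+(c,v)` containing the edge `{c,v}`. -/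
theorem stmt_8 (G : SimpleGraph V) (v : V) {r : ℕ} (hr : 1 ≤ r)
    (c : V) (hne : c ≠ v) (hadj : ¬ G.Adj c v) :
    cnMultiEdgeLocalGirth G c v r ≤ G.edist c v + 1 ∧
    cnMultiEdgeLocalGirth G c v r ≤ edgeLocalGirth (addEdge G c v) s(c, v) := by
  classical
  have hG' : G ≤ addEdge G c v := le_sup_left
  have hcv : (addEdge G c v).Adj c v := by
    simp [addEdge, SimpleGraph.fromEdgeSet_adj, hne]
  -- main inequality against edgeLocalGirth
  have key : cnMultiEdgeLocalGirth G c v r ≤ edgeLocalGirth (addEdge G c v) s(c, v) := by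
    unfold cnMultiEdgeLocalGirth
    split
    · exact localGirth_le_edgeLocalGirth
    · refine iSup_le fun s => iSup_le fun hs => ?_
      calc localGirth (graphSeq (addEdge G c v) v s (r - 1)) v
          ≤ localGirth (addEdge G c v) v :=
            localGirth_anti (le_graphSeq (addEdge G c v) v s (r - 1)) v
        _ ≤ _ := localGirth_le_edgeLocalGirth
  refine ⟨key.trans ?_, key⟩
  -- edgeLocalGirth ≤ edist + 1
  rcases eq_or_ne (G.edist c v) ⊤ with htop | htop
  · simp [htop]
  obtain ⟨p, hp⟩ := SimpleGraph.exists_walk_of_edist_ne_top htop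
  set q := p.reverse.bypass with hq
  have hqpath : q.IsPath := p.reverse.bypass_isPath
  have hqlen : (q.length : ℕ∞) ≤ G.edist c v := by
    have h1 : q.length ≤ p.reverse.length := SimpleGraph.Walk.length_bypass_le _
    have h2 : p.reverse.length = p.length := SimpleGraph.Walk.length_reverse _
    have : (q.length : ℕ∞) ≤ (p.length : ℕ∞) := by exact_mod_cast h1.trans h2.le
    rwa [hp] at this
  have hnotedge : s(c, v) ∉ (q.mapLe hG').edges := by
    intro hmem
    have : s(c, v) ∈ q.edges := by
      simp only [SimpleGraph.Walk.mapLe, SimpleGraph.Walk.edges_map, List.mem_map] at hmem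
      obtain ⟨e, he, heq⟩ := hmem
      have hid : Sym2.map (⇑(SimpleGraph.Hom.ofLE hG')) e = e := by
        induction e with
        | h x y => rfl
      rw [hid] at heq
      rwa [heq] at he
    exact hadj (q.adj_of_mem_edges this)
  have hcyc : (SimpleGraph.Walk.cons hcv (q.mapLe hG')).IsCycle := by
    rw [SimpleGraph.Walk.cons_isCycle_iff]
    exact ⟨hqpath.mapLe hG', hnotedge⟩
  have hedge : s(c, v) ∈ (SimpleGraph.Walk.cons hcv (q.mapLe hG')).edges := by
    simp [SimpleGraph.Walk.edges_cons]
  have := edgeLocalGirth_le hcyc hedge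
  refine this.trans ?_
  have : ((SimpleGraph.Walk.cons hcv (q.mapLe hG')).length : ℕ∞) = (q.length : ℕ∞) + 1 := by
    simp [SimpleGraph.Walk.length_cons]
  rw [this]
  exact add_le_add_left hqlen 1
end
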